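/- The number of Dyck paths of length 2n with exactly k high peaks equals the number of Dyck paths of length 2n with exactly k descents (valleys); i.e., high peaks are a Narayana statistic. -/

import Mathlib

open Finset

/-- The `i`-th letter (1-indexed) of a word `w`; `true` = vertical step `v`,
`false` = horizontal step `h`; junk value `false` out of range. -/
def ltr {m : ℕ} (w : Fin m → Bool) (i : ℕ) : Bool :=
  if h : 1 ≤ i ∧ i ≤ m then w ⟨i - 1, by omega⟩ else false

/-- The number of occurrences of the letter `b` among the first `i` letters of `w`. -/
def pcnt {m : ℕ} (w : Fin m → Bool) (b : Bool) (i : ℕ) : ℕ :=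
  ((Finset.Icc 1 i).filter fun j => ltr w j = b).card

/-- `w` is a Dyck path of length `2n`: `n` vertical steps and every prefix has at
least as many `v`'s as `h`'s. -/
def IsDyck (n : ℕ) (w : Fin (2 * n) → Bool) : Prop :=
  pcnt w true (2 * n) = n ∧ ∀ i ≤ 2 * n, pcnt w false i ≤ pcnt w true i

/-- The descent (valley) set of `w`: positions `i` with `w_i = h`, `w_{i+1} = v`. -/
def Des {n : ℕ} (w : Fin (2 * n) → Bool) : Finset ℕ :=
  (Finset.Icc 1 (2 * n - 1)).filter fun i => ltr w i = false ∧ ltr w (i + 1) = true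

/-- The set of positions of high peaks of `w`: `i` with `w_i = v`, `w_{i+1} = h`
such that the peak vertex lies strictly above the diagonal (the path does not
return to the diagonal after the `h` step). -/
def HP {n : ℕ} (w : Fin (2 * n) → Bool) : Finset ℕ :=
  (Finset.Icc 1 (2 * n - 1)).filter fun i =>
    ltr w i = true ∧ ltr w (i + 1) = false ∧ pcnt w false i + 2 ≤ pcnt w true i

namespace DyckAux

/-- list-level Dyck property -/
def dyckL (l : List Bool) : Prop :=
  (∀ i, (l.take i).count false ≤ (l.take i).count true) ∧ l.count true = l.count false

lemma count_true_add_count_false (l : List Bool) :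
    l.count true + l.count false = l.length := by
  induction l with
  | nil => simp
  | cons a t ih => cases a <;> simp [List.count_cons] <;> omega

lemma dyckL_nil : dyckL [] := by constructor <;> simp

lemma dyckL_glue {A B : List Bool} (hA : dyckL A) (hB : dyckL B) :
    dyckL (true :: (A ++ false :: B)) := by
  have hAbal := hA.2
  have hBbal := hB.2
  constructor
  · intro i
    cases i with
    | zero => simp
    | succ j =>
      rw [List.take_succ_cons, List.take_append]
      rcases Nat.lt_or_ge j A.length with hj | hj
      · have h0 : j - A.length = 0 := by omega
        have h1 := hA.1 j
        rw [h0]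
        simp [List.count_cons]
        omega
      · rw [List.take_of_length_le hj]
        cases hjj : j - A.length with
        | zero => simp [List.count_cons]; omega
        | succ m =>
          rw [List.take_succ_cons]
          have h1 := hB.1 m
          simp [List.count_append, List.count_cons]
          omega
  · simp [List.count_cons, List.count_append]
    omega

lemma dyckL_head {l : List Bool} (h : dyckL l) (hne : l ≠ []) :
    l.getD 0 false = true := by
  cases l with
  | nil => exact absurd rfl hne
  | cons a t =>
    have := h.1 1
    cases a
    · simp [List.count_cons] at this
    · rfl

lemma dyckL_last {l : List Bool} (h : dyckL l) (hne : l ≠ []) :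
    l.getD (l.length - 1) false = false := by
  have hlen : 0 < l.length := List.length_pos_iff.mpr hne
  have hlt : l.length - 1 < l.length := by omega
  rw [List.getD_eq_getElem l false hlt]
  by_contra hc
  have hx : l[l.length - 1] = true := by
    cases hxx : l[l.length - 1] <;> simp_all
  have hbal := h.2
  have hpre := h.1 (l.length - 1)
  rw [← List.dropLast_append_getLast hne] at hbal
  have hgl : l.getLast hne = l[l.length - 1] := List.getLast_eq_getElem hne
  rw [hgl, hx] at hbal
  simp only [List.count_append, List.count_singleton, List.dropLast_eq_take] at hbal
  simp at hbal

  omega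

/-- for a dyck word, a prefix ending in `true` satisfies a strict inequality -/
lemma dyckL_strict {l : List Bool} (h : dyckL l) {i : ℕ} (hi : i < l.length)
    (ht : l.getD i false = true) :
    (l.take (i+1)).count false + 1 ≤ (l.take (i+1)).count true := by
  have hpre := h.1 i
  rw [List.take_succ]
  rw [List.getD_eq_getElem l false hi] at ht
  rw [List.getElem?_eq_getElem hi, ht]
  simp only [Option.toList_some, List.count_append, List.count_singleton]
  simp
  omega


/-- Plane-tree representation of Dyck words: `node A B` is `v A h B`. -/
inductive DT : Type
  | nil : DT
  | node (A B : DT) : DT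
  deriving DecidableEq

namespace DT

def sz : DT → ℕ
  | nil => 0
  | node A B => A.sz + B.sz + 1

def pk : DT → ℕ
  | nil => 0
  | node A B => A.pk + B.pk + (if A = nil then 1 else 0)

def vl : DT → ℕ
  | nil => 0
  | node A B => A.vl + B.vl + (if B = nil then 0 else 1)

def hp : DT → ℕ
  | nil => 0
  | node A B => A.pk + B.hp

def phi : DT → DT
  | nil => nil
  | node A B => node B.phi A

def psi : DT → DT
  | nil => nil
  | node X Y => node Y X.psi

lemma psi_phi (t : DT) : psi (phi t) = t := by
  induction t with
  | nil => rfl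
  | node A B ihA ihB => simp [phi, psi, ihB]

lemma phi_psi (t : DT) : phi (psi t) = t := by
  induction t with
  | nil => rfl
  | node A B ihA ihB => simp [phi, psi, ihA]

lemma sz_phi (t : DT) : sz (phi t) = sz t := by
  induction t with
  | nil => rfl
  | node A B ihA ihB => simp [phi, sz, ihB]; omega

lemma pk_eq_vl (t : DT) : pk t = vl t + (if t = nil then 0 else 1) := by
  induction t with
  | nil => rfl
  | node A B ihA ihB =>
    simp only [pk, vl, ihA, ihB]
    by_cases hA : A = nil <;> by_cases hB : B = nil <;> simp [hA, hB] <;> omega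

lemma vl_phi (t : DT) : vl (phi t) = hp t := by
  induction t with
  | nil => rfl
  | node A B ihA ihB =>
    simp only [phi, vl, hp, ihB, pk_eq_vl A]
    omega

def toL : DT → List Bool
  | nil => []
  | node A B => true :: (A.toL ++ false :: B.toL)

lemma length_toL (t : DT) : (toL t).length = 2 * sz t := by
  induction t with
  | nil => rfl
  | node A B ihA ihB => simp [toL, sz, ihA, ihB]; omega

lemma toL_eq_nil_iff (t : DT) : toL t = [] ↔ t = nil := by
  cases t <;> simp [toL]

end DT


def dInd (l : List Bool) (i : ℕ) : ℕ :=
  if l.getD i false = false ∧ l.getD (i+1) false = true then 1 else 0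
def pInd (l : List Bool) (i : ℕ) : ℕ :=
  if l.getD i false = true ∧ l.getD (i+1) false = false then 1 else 0
def hInd (l : List Bool) (i : ℕ) : ℕ :=
  if l.getD i false = true ∧ l.getD (i+1) false = false ∧
     (l.take (i+1)).count false + 2 ≤ (l.take (i+1)).count true then 1 else 0

def dstat (l : List Bool) : ℕ := ∑ i ∈ range (l.length - 1), dInd l i
def pstat (l : List Bool) : ℕ := ∑ i ∈ range (l.length - 1), pInd l i
def hstat (l : List Bool) : ℕ := ∑ i ∈ range (l.length - 1), hInd l i

section glue

variable (A B : List Bool)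

private lemma mA {i : ℕ} (hi : i < A.length) :
    (A ++ false :: B).getD i false = A.getD i false :=
  List.getD_append _ _ _ _ hi

private lemma mB (k : ℕ) :
    (A ++ false :: B).getD (A.length + k) false = (false :: B).getD k false := by
  rw [List.getD_append_right _ _ _ _ (Nat.le_add_right _ _)]
  congr 1
  omega

private lemma mA2 {i : ℕ} (hi : i < A.length) :
    (A ++ false :: B).getD (i+1) false = A.getD (i+1) false := by
  rcases Nat.lt_or_ge (i+1) A.length with h | h
  · exact mA A B h
  · have h1 : i + 1 = A.length + 0 := by omega
    rw [h1, mB, List.getD_eq_default A _ (by omega)]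
    rfl

private lemma mB0 :
    (A ++ false :: B).getD A.length false = false := by
  have := mB A B 0
  rw [Nat.add_zero] at this
  rw [this]
  rfl

private lemma tA {i : ℕ} (hi : i ≤ A.length) :
    (true :: (A ++ false :: B)).take (i+1) = true :: A.take i := by
  rw [List.take_succ_cons, List.take_append]
  have : i - A.length = 0 := by omega
  rw [this]
  simp

private lemma tB (k : ℕ) :
    (true :: (A ++ false :: B)).take (A.length + 1 + (k+1) + 1)
      = true :: (A ++ false :: B.take (k+1)) := by
  have h1 : A.length + 1 + (k+1) + 1 = (A.length + (k+2)) + 1 := by omega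
  rw [h1, List.take_succ_cons, List.take_append]
  rw [List.take_of_length_le (by omega)]
  have h2 : A.length + (k+2) - A.length = (k+1)+1 := by omega
  rw [h2, List.take_succ_cons]

-- first-piece pointwise lemmas
private lemma E1d {i : ℕ} (hi : i < A.length) :
    dInd (true :: (A ++ false :: B)) (i+1) = dInd A i := by
  unfold dInd
  rw [List.getD_cons_succ, List.getD_cons_succ, mA A B hi, mA2 A B hi]

private lemma E1p {i : ℕ} (hi : i < A.length) :
    pInd (true :: (A ++ false :: B)) (i+1) = pInd A i := by
  unfold pInd
  rw [List.getD_cons_succ, List.getD_cons_succ, mA A B hi, mA2 A B hi]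

private lemma E1h (hA : dyckL A) {i : ℕ} (hi : i < A.length) :
    hInd (true :: (A ++ false :: B)) (i+1) = pInd A i := by
  unfold hInd pInd
  rw [List.getD_cons_succ, List.getD_cons_succ, mA A B hi, mA2 A B hi,
    tA A B (by omega : i + 1 ≤ A.length)]
  by_cases h : A.getD i false = true ∧ A.getD (i+1) false = false
  · rw [if_pos h, if_pos]
    refine ⟨h.1, h.2, ?_⟩
    have := dyckL_strict hA hi h.1
    simp [List.count_cons]
    omega
  · rw [if_neg h, if_neg]
    intro hc
    exact h ⟨hc.1, hc.2.1⟩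

-- position-0 lemmas
private lemma E0d : dInd (true :: (A ++ false :: B)) 0 = 0 := by
  unfold dInd; simp

private lemma E0p (hA : dyckL A) :
    pInd (true :: (A ++ false :: B)) 0 = if A = [] then 1 else 0 := by
  unfold pInd
  cases A with
  | nil => simp
  | cons a A' =>
    have := dyckL_head hA (by simp)
    simp only [List.getD_cons_zero] at this
    simp [this]

private lemma E0h (hA : dyckL A) : hInd (true :: (A ++ false :: B)) 0 = 0 := by
  unfold hInd
  cases A with
  | nil => simp
  | cons a A' =>
    have := dyckL_head hA (by simp)
    simp only [List.getD_cons_zero] at this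
    simp [this]

-- middle position lemmas
private lemma Emidd (hB : dyckL B) :
    dInd (true :: (A ++ false :: B)) (A.length + 1 + 0) = if B = [] then 0 else 1 := by
  unfold dInd
  rw [Nat.add_zero, List.getD_cons_succ]
  rw [List.getD_cons_succ]
  rw [mB0 A B, mB A B 1]
  cases B with
  | nil => simp
  | cons b B' =>
    have := dyckL_head hB (by simp)
    simp only [List.getD_cons_zero] at this
    simp [this]

private lemma Emidp :
    pInd (true :: (A ++ false :: B)) (A.length + 1 + 0) = 0 := by
  unfold pInd
  rw [Nat.add_zero, List.getD_cons_succ, mB0 A B]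
  simp

private lemma Emidh :
    hInd (true :: (A ++ false :: B)) (A.length + 1 + 0) = 0 := by
  unfold hInd
  rw [Nat.add_zero, List.getD_cons_succ, mB0 A B]
  simp

-- second-piece pointwise lemmas
private lemma idx1 (i : ℕ) : A.length + 1 + (i+1) = (A.length + (i+1)) + 1 := by omega
private lemma idx2 (i : ℕ) : A.length + 1 + (i+1) + 1 = (A.length + (i+2)) + 1 := by omega

private lemma gB1 (i : ℕ) :
    (true :: (A ++ false :: B)).getD (A.length + 1 + (i+1)) false = B.getD i false := by
  rw [idx1, List.getD_cons_succ, mB, List.getD_cons_succ]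

private lemma gB2 (i : ℕ) :
    (true :: (A ++ false :: B)).getD (A.length + 1 + (i+1) + 1) false = B.getD (i+1) false := by
  rw [idx2, List.getD_cons_succ, mB, List.getD_cons_succ]

private lemma E2d (i : ℕ) :
    dInd (true :: (A ++ false :: B)) (A.length + 1 + (i+1)) = dInd B i := by
  unfold dInd
  rw [gB1, gB2]

private lemma E2p (i : ℕ) :
    pInd (true :: (A ++ false :: B)) (A.length + 1 + (i+1)) = pInd B i := by
  unfold pInd
  rw [gB1, gB2]

private lemma E2h (hA : dyckL A) (i : ℕ) :
    hInd (true :: (A ++ false :: B)) (A.length + 1 + (i+1)) = hInd B i := by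
  unfold hInd
  rw [gB1, gB2, tB]
  have hbal := hA.2
  have hiff : ((true :: (A ++ false :: B.take (i+1))).count false + 2 ≤
      (true :: (A ++ false :: B.take (i+1))).count true) ↔
      ((B.take (i+1)).count false + 2 ≤ (B.take (i+1)).count true) := by
    simp [List.count_cons, List.count_append]
    omega
  simp only [hiff]

end glue

-- summation helpers
lemma sum_dInd (A : List Bool) : ∑ i ∈ range A.length, dInd A i = dstat A := by
  cases A with
  | nil => rfl
  | cons a A' =>
    rw [List.length_cons, Finset.sum_range_succ]
    have h0 : dInd (a :: A') A'.length = 0 := by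
      unfold dInd
      rw [List.getD_cons_succ, List.getD_eq_default _ _ (le_refl _)]
      simp
    rw [h0, Nat.add_zero]
    rfl

lemma sum_pInd {A : List Bool} (hA : dyckL A) :
    ∑ i ∈ range A.length, pInd A i = pstat A := by
  cases A with
  | nil => rfl
  | cons a A' =>
    rw [List.length_cons, Finset.sum_range_succ]
    have hlast := dyckL_last hA (by simp)
    simp only [List.length_cons, Nat.add_sub_cancel] at hlast
    have h0 : pInd (a :: A') A'.length = 0 := by
      unfold pInd
      rw [hlast]
      simp
    rw [h0, Nat.add_zero]
    rfl

lemma len_glue (A B : List Bool) :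
    (true :: (A ++ false :: B)).length - 1 = (A.length + 1) + B.length := by
  simp; omega

theorem dstat_glue {A B : List Bool} (hA : dyckL A) (hB : dyckL B) :
    dstat (true :: (A ++ false :: B)) = dstat A + dstat B + (if B = [] then 0 else 1) := by
  rw [dstat, len_glue, Finset.sum_range_add]
  have p1 : ∑ i ∈ range (A.length + 1), dInd (true :: (A ++ false :: B)) i = dstat A := by
    rw [Finset.sum_range_succ', E0d, Nat.add_zero]
    rw [Finset.sum_congr rfl fun i hi => E1d A B (Finset.mem_range.mp hi)]
    exact sum_dInd A
  rw [p1]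
  cases B with
  | nil => simp [dstat]
  | cons b B' =>
    rw [List.length_cons, Finset.sum_range_succ', Emidd A _ hB]
    rw [Finset.sum_congr rfl fun i _ => E2d A (b :: B') i]
    have : ∑ i ∈ range B'.length, dInd (b :: B') i = dstat (b :: B') := by
      rw [dstat]; rfl
    rw [this]
    omega

theorem pstat_glue {A B : List Bool} (hA : dyckL A) (hB : dyckL B) :
    pstat (true :: (A ++ false :: B)) = pstat A + pstat B + (if A = [] then 1 else 0) := by
  rw [pstat, len_glue, Finset.sum_range_add]
  have p1 : ∑ i ∈ range (A.length + 1), pInd (true :: (A ++ false :: B)) i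
      = pstat A + (if A = [] then 1 else 0) := by
    rw [Finset.sum_range_succ', E0p A B hA]
    rw [Finset.sum_congr rfl fun i hi => E1p A B (Finset.mem_range.mp hi)]
    rw [sum_pInd hA]
  rw [p1]
  cases B with
  | nil => simp [pstat]
  | cons b B' =>
    rw [List.length_cons, Finset.sum_range_succ', Emidp]
    rw [Finset.sum_congr rfl fun i _ => E2p A (b :: B') i]
    have : ∑ i ∈ range B'.length, pInd (b :: B') i = pstat (b :: B') := by
      rw [pstat]; rfl
    rw [this]
    omega

theorem hstat_glue {A B : List Bool} (hA : dyckL A) (hB : dyckL B) :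
    hstat (true :: (A ++ false :: B)) = pstat A + hstat B := by
  rw [hstat, len_glue, Finset.sum_range_add]
  have p1 : ∑ i ∈ range (A.length + 1), hInd (true :: (A ++ false :: B)) i = pstat A := by
    rw [Finset.sum_range_succ', E0h A B hA]
    rw [Finset.sum_congr rfl fun i hi => E1h A B hA (Finset.mem_range.mp hi)]
    rw [sum_pInd hA]
    omega
  rw [p1]
  cases B with
  | nil => simp [hstat]
  | cons b B' =>
    rw [List.length_cons, Finset.sum_range_succ', Emidh]
    rw [Finset.sum_congr rfl fun i _ => E2h A (b :: B') hA i]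
    have : ∑ i ∈ range B'.length, hInd (b :: B') i = hstat (b :: B') := by
      rw [hstat]; rfl
    rw [this]
    simp


lemma dyckL_toL (t : DT) : dyckL t.toL := by
  induction t with
  | nil => exact dyckL_nil
  | node A B ihA ihB => exact dyckL_glue ihA ihB

lemma exists_toL : ∀ N (l : List Bool), l.length ≤ N → dyckL l → ∃ t : DT, t.toL = l := by
  intro N
  induction N with
  | zero =>
    intro l hl _
    cases l with
    | nil => exact ⟨DT.nil, rfl⟩
    | cons a l' => simp at hl
  | succ N ih =>
    intro l hl hd
    cases l with
    | nil => exact ⟨DT.nil, rfl⟩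
    | cons a l' =>
      have ha : a = true := by
        have := dyckL_head hd (by simp)
        simpa using this
      subst ha
      have hPex : ∃ i, 1 ≤ i ∧ ((true :: l').take i).count true
          = ((true :: l').take i).count false := by
        refine ⟨l'.length + 1, by omega, ?_⟩
        rw [List.take_of_length_le (by simp)]
        exact hd.2
      classical
      have hl' : l'.length ≤ N := by simpa using hl
      obtain ⟨j, ⟨hj1, hjbal⟩, hmin, hjle⟩ :
          ∃ j, (1 ≤ j ∧ ((true :: l').take j).count true = ((true :: l').take j).count false) ∧
            (∀ m, m < j → ¬(1 ≤ m ∧ ((true :: l').take m).count true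
              = ((true :: l').take m).count false)) ∧ j ≤ l'.length + 1 :=
        ⟨Nat.find hPex, Nat.find_spec hPex, fun m hm => Nat.find_min hPex hm,
          Nat.find_min' hPex ⟨by omega, by
            rw [List.take_of_length_le (by simp)]; exact hd.2⟩⟩
      have hj2 : 2 ≤ j := by
        rcases Nat.lt_or_ge j 2 with h | h
        · exfalso
          have hj1' : j = 1 := by omega
          rw [hj1', show (1:ℕ) = 0 + 1 from rfl, List.take_succ_cons] at hjbal
          simp at hjbal
        · exact h
      -- the strict prefix inequality below the first return
      have hstrictpre : ∀ i', i' + 1 < j →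
          (l'.take i').count false ≤ (l'.take i').count true := by
        intro i' hi'
        have hnp := hmin (i'+1) hi'
        have hd1 := hd.1 (i'+1)
        rw [List.take_succ_cons] at hd1
        simp only [List.take_succ_cons, not_and] at hnp
        have hne := hnp (by omega)
        simp [List.count_cons] at hne hd1 ⊢
        omega
      have hxlt : j - 2 < l'.length := by omega
      set u := l'.take (j-2) with hudef
      set x := l'[j-2] with hxdef
      set B := l'.drop (j-1) with hBdef
      have hsplit : l' = u ++ x :: B := by
        conv_lhs => rw [← List.take_append_drop (j-2) l']
        congr 1
        rw [List.drop_eq_getElem_cons hxlt, hBdef, show j - 2 + 1 = j - 1 by omega]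
      -- counts of u
      have hupre : ∀ i, (u.take i).count false ≤ (u.take i).count true := by
        intro i
        rw [hudef, List.take_take]
        exact hstrictpre (min i (j-2)) (by omega)
      -- take (j-1) of l'
      have htj1 : l'.take (j-1) = u ++ [x] := by
        have : j - 1 = (j-2) + 1 := by omega
        rw [this, List.take_succ, List.getElem?_eq_getElem hxlt]
        rfl
      -- from P j : balance
      have hjbal' : 1 + (u ++ [x]).count true = (u ++ [x]).count false := by
        have hj' : j = (j-1) + 1 := by omega
        have hjbal2 : ((true :: l').take ((j-1)+1)).count true
            = ((true :: l').take ((j-1)+1)).count false := by rw [← hj']; exact hjbal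
        rw [List.take_succ_cons, htj1] at hjbal2
        simp [List.count_cons] at hjbal2 ⊢
        omega
      have hult : (u.take (j-2)).count false ≤ (u.take (j-2)).count true := hupre _
      have huself : u.take (j-2) = u := by
        rw [hudef, List.take_take]
        simp
      have hufalse : (u.count false ≤ u.count true) := by
        rw [← huself]; exact hult
      have hxf : x = false := by
        rcases hx : x with _ | _
        · rfl
        · exfalso
          rw [hx] at hjbal'
          simp [List.count_append] at hjbal'
          omega
      have hubal : u.count true = u.count false := by
        rw [hxf] at hjbal'
        simp [List.count_append] at hjbal'
        omega
      have hdu : dyckL u := ⟨hupre, hubal⟩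
      -- dyck B
      have hdropj : (true :: l').drop j = B := by
        have : j = (j-1) + 1 := by omega
        rw [this, List.drop_succ_cons]
      have htakej : ((true :: l').take j).count true = ((true :: l').take j).count false :=
        hjbal
      have hBpre : ∀ i, (B.take i).count false ≤ (B.take i).count true := by
        intro i
        have h1 := hd.1 (j + i)
        rw [List.take_add, hdropj] at h1
        simp only [List.count_append] at h1
        omega
      have hBbal : B.count true = B.count false := by
        have h2 := hd.2
        conv_lhs at h2 => rw [← List.take_append_drop j (true :: l')]
        conv_rhs at h2 => rw [← List.take_append_drop j (true :: l')]
        rw [hdropj] at h2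
        simp only [List.count_append] at h2
        omega
      have hdB : dyckL B := ⟨hBpre, hBbal⟩
      have hul : u.length ≤ N := by
        rw [hudef, List.length_take]
        omega
      have hBl : B.length ≤ N := by
        rw [hBdef, List.length_drop]
        omega
      obtain ⟨tu, htu⟩ := ih u hul hdu
      obtain ⟨tB, htB⟩ := ih B hBl hdB
      refine ⟨DT.node tu tB, ?_⟩
      rw [DT.toL, htu, htB, ← hxf, ← hsplit]

-- injectivity of toL
lemma no_lt {X X' Y Y' : List Bool} (hX : dyckL X) (hX' : dyckL X')
    (hlt : X.length < X'.length) : X ++ false :: Y ≠ X' ++ false :: Y' := by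
  intro h
  have htake := congrArg (List.take (X.length + 1)) h
  rw [List.take_append, List.take_append] at htake
  rw [List.take_of_length_le (by omega)] at htake
  have h1 : X.length + 1 - X.length = 1 := by omega
  have h2 : X.length + 1 - X'.length = 0 := by omega
  rw [h1, h2, List.take_zero, List.append_nil] at htake
  have hcF := congrArg (List.count false) htake
  have hcT := congrArg (List.count true) htake
  simp only [List.count_append, List.take_succ_cons, List.take_zero, List.count_cons,
    List.count_nil] at hcF hcT
  have hpre := hX'.1 (X.length + 1)
  have hbal := hX.2
  simp at hcF hcT
  omega

lemma toL_inj : ∀ (t₁ t₂ : DT), t₁.toL = t₂.toL → t₁ = t₂ := by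
  intro t₁
  induction t₁ with
  | nil =>
    intro t₂ h
    cases t₂ with
    | nil => rfl
    | node A B => simp [DT.toL] at h
  | node A B ihA ihB =>
    intro t₂ h
    cases t₂ with
    | nil => simp [DT.toL] at h
    | node A' B' =>
      simp only [DT.toL, List.cons.injEq, true_and] at h
      have hlen : A.toL.length = A'.toL.length := by
        by_contra hne
        rcases Nat.lt_or_ge A.toL.length A'.toL.length with hlt | hge
        · exact no_lt (dyckL_toL A) (dyckL_toL A') hlt h
        · exact no_lt (dyckL_toL A') (dyckL_toL A) (by omega) h.symm
      obtain ⟨hA, hB⟩ := List.append_inj h hlen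
      rw [ihA A' hA, ihB B' (by injection hB)]



lemma pstat_toL (t : DT) : pstat t.toL = t.pk := by
  induction t with
  | nil => rfl
  | node A B ihA ihB =>
    rw [DT.toL, pstat_glue (dyckL_toL A) (dyckL_toL B), ihA, ihB]
    simp [DT.pk, DT.toL_eq_nil_iff]

lemma dstat_toL (t : DT) : dstat t.toL = t.vl := by
  induction t with
  | nil => rfl
  | node A B ihA ihB =>
    rw [DT.toL, dstat_glue (dyckL_toL A) (dyckL_toL B), ihA, ihB]
    simp [DT.vl, DT.toL_eq_nil_iff]

lemma hstat_toL (t : DT) : hstat t.toL = t.hp := by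
  induction t with
  | nil => rfl
  | node A B ihA ihB =>
    rw [DT.toL, hstat_glue (dyckL_toL A) (dyckL_toL B), pstat_toL A, ihB]
    simp [DT.hp]

-- bridge to the Fin encoding
lemma ltr_succ {m : ℕ} (w : Fin m → Bool) (i : ℕ) :
    ltr w (i+1) = (List.ofFn w).getD i false := by
  unfold ltr
  rcases Nat.lt_or_ge i m with h | h
  · rw [dif_pos ⟨by omega, by omega⟩]
    rw [List.getD_eq_getElem _ _ (by simpa using h), List.getElem_ofFn]
    congr
  · rw [dif_neg (by omega), List.getD_eq_default _ _ (by simpa using h)]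

lemma pcnt_eq {m : ℕ} (w : Fin m → Bool) (b : Bool) :
    ∀ i, i ≤ m → pcnt w b i = ((List.ofFn w).take i).count b := by
  intro i
  induction i with
  | zero => intro _; simp [pcnt]
  | succ i ih =>
    intro hi
    have hilen : i < (List.ofFn w).length := by simpa using hi
    have h1 : pcnt w b (i+1) = pcnt w b i + (if ltr w (i+1) = b then 1 else 0) := by
      rw [pcnt, pcnt, Finset.card_filter, Finset.card_filter, ← Finset.Ico_add_one_right_eq_Icc,
        ← Finset.Ico_add_one_right_eq_Icc, Finset.sum_Ico_succ_top (by omega)]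
    rw [h1, ih (by omega), List.take_succ, List.count_append,
      List.getElem?_eq_getElem hilen, ltr_succ, List.getD_eq_getElem _ _ hilen]
    simp [List.count_cons]

lemma isDyck_iff {n : ℕ} (w : Fin (2*n) → Bool) : IsDyck n w ↔ dyckL (List.ofFn w) := by
  have hlen : (List.ofFn w).length = 2*n := by simp
  have hsum := count_true_add_count_false (List.ofFn w)
  constructor
  · rintro ⟨h1, h2⟩
    have hT : (List.ofFn w).count true = n := by
      have h3 := pcnt_eq w true (2*n) (le_refl _)
      rw [List.take_of_length_le (by omega)] at h3
      omega
    constructor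
    · intro i
      rcases le_or_gt i (2*n) with h | h
      · rw [← pcnt_eq w false i h, ← pcnt_eq w true i h]
        exact h2 i h
      · rw [List.take_of_length_le (by omega)]
        omega
    · omega
  · rintro ⟨h1, h2⟩
    constructor
    · rw [pcnt_eq w true (2*n) (le_refl _), List.take_of_length_le (by omega)]
      omega
    · intro i hi
      rw [pcnt_eq w false i hi, pcnt_eq w true i hi]
      exact h1 i

lemma Des_card {n : ℕ} (w : Fin (2*n) → Bool) : (Des w).card = dstat (List.ofFn w) := by
  rw [Des, Finset.card_filter, ← Finset.Ico_add_one_right_eq_Icc, Finset.sum_Ico_eq_sum_range, dstat,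
    List.length_ofFn]
  rw [show 2*n - 1 + 1 - 1 = 2*n - 1 by omega]
  apply Finset.sum_congr rfl
  intro i hi
  have e1 : ltr w (1+i) = (List.ofFn w).getD i false := by
    rw [Nat.add_comm]; exact ltr_succ w i
  have e2 : ltr w (1+i+1) = (List.ofFn w).getD (i+1) false := by
    rw [show 1+i+1 = (i+1)+1 by omega]; exact ltr_succ w (i+1)
  rw [e1, e2, dInd]

lemma HP_card {n : ℕ} (w : Fin (2*n) → Bool) : (HP w).card = hstat (List.ofFn w) := by
  rw [HP, Finset.card_filter, ← Finset.Ico_add_one_right_eq_Icc, Finset.sum_Ico_eq_sum_range, hstat,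
    List.length_ofFn]
  rw [show 2*n - 1 + 1 - 1 = 2*n - 1 by omega]
  apply Finset.sum_congr rfl
  intro i hi
  rw [Finset.mem_range] at hi
  have e1 : ltr w (1+i) = (List.ofFn w).getD i false := by
    rw [Nat.add_comm]; exact ltr_succ w i
  have e2 : ltr w (1+i+1) = (List.ofFn w).getD (i+1) false := by
    rw [show 1+i+1 = (i+1)+1 by omega]; exact ltr_succ w (i+1)
  have e3 : pcnt w false (1+i) = (((List.ofFn w)).take (i+1)).count false := by
    rw [Nat.add_comm]; exact pcnt_eq w false (i+1) (by omega)
  have e4 : pcnt w true (1+i) = (((List.ofFn w)).take (i+1)).count true := by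
    rw [Nat.add_comm]; exact pcnt_eq w true (i+1) (by omega)
  rw [e1, e2, e3, e4, hInd]

lemma ofFn_getD (l : List Bool) (m : ℕ) (h : l.length = m) :
    List.ofFn (fun i : Fin m => l.getD i false) = l := by
  apply List.ext_getElem
  · simp [h]
  · intro i h1 h2
    simp only [List.getElem_ofFn]
    exact List.getD_eq_getElem l false h2

end DyckAux


theorem highPeaks_equidistributed_with_descents (n k : ℕ) :
    Nat.card {w : Fin (2 * n) → Bool // IsDyck n w ∧ (HP w).card = k} =
      Nat.card {w : Fin (2 * n) → Bool // IsDyck n w ∧ (Des w).card = k} := by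
  classical
  open DyckAux in
  have hofL : ∀ t : DyckAux.DT, t.sz = n →
      List.ofFn (fun i : Fin (2*n) => t.toL.getD i false) = t.toL := by
    intro t ht
    exact DyckAux.ofFn_getD _ _ (by rw [DyckAux.DT.length_toL, ht])
  have hcard : ∀ (stW : ∀ w : Fin (2*n) → Bool, ℕ) (stT : DyckAux.DT → ℕ),
      (∀ w : Fin (2*n) → Bool, stW w = stT (DyckAux.DT.nil) + 0) → True := fun _ _ _ => trivial
  -- bijection between words with a given statistic value and trees
  have main : ∀ (stW : (Fin (2*n) → Bool) → ℕ) (stT : DyckAux.DT → ℕ),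
      (∀ w : Fin (2*n) → Bool, stW w = (fun l => l) (stW w)) → True := fun _ _ _ => trivial
  have hHP : Nat.card {w : Fin (2 * n) → Bool // IsDyck n w ∧ (HP w).card = k}
      = Nat.card {t : DyckAux.DT // t.sz = n ∧ t.hp = k} := by
    refine (Nat.card_eq_of_bijective
      (fun tp : {t : DyckAux.DT // t.sz = n ∧ t.hp = k} =>
        (⟨fun i => tp.1.toL.getD i false, ?_⟩ :
          {w : Fin (2 * n) → Bool // IsDyck n w ∧ (HP w).card = k})) ⟨?_, ?_⟩).symm
    · obtain ⟨t, ht, hk⟩ := tp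
      have hof := hofL t ht
      constructor
      · rw [DyckAux.isDyck_iff, hof]
        exact DyckAux.dyckL_toL t
      · rw [DyckAux.HP_card, hof, DyckAux.hstat_toL, hk]
    · rintro ⟨t1, h1⟩ ⟨t2, h2⟩ h
      apply Subtype.ext
      have := congrArg (fun v => List.ofFn v.1) h
      simp only at this
      rw [hofL t1 h1.1, hofL t2 h2.1] at this
      exact DyckAux.toL_inj t1 t2 this
    · rintro ⟨w, hdy, hk⟩
      have hdL : DyckAux.dyckL (List.ofFn w) := (DyckAux.isDyck_iff w).mp hdy
      obtain ⟨t, ht⟩ := DyckAux.exists_toL (2*n) (List.ofFn w) (by simp) hdL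
      have hsz : t.sz = n := by
        have := DyckAux.DT.length_toL t
        rw [ht] at this
        simp at this
        omega
      have hhp : t.hp = k := by
        rw [← DyckAux.hstat_toL, ht, ← DyckAux.HP_card, hk]
      refine ⟨⟨t, hsz, hhp⟩, ?_⟩
      apply Subtype.ext
      funext i
      show t.toL.getD i false = w i
      rw [ht, List.getD_eq_getElem _ _ (by simpa using i.isLt), List.getElem_ofFn]
  have hDes : Nat.card {w : Fin (2 * n) → Bool // IsDyck n w ∧ (Des w).card = k}
      = Nat.card {t : DyckAux.DT // t.sz = n ∧ t.vl = k} := by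
    refine (Nat.card_eq_of_bijective
      (fun tp : {t : DyckAux.DT // t.sz = n ∧ t.vl = k} =>
        (⟨fun i => tp.1.toL.getD i false, ?_⟩ :
          {w : Fin (2 * n) → Bool // IsDyck n w ∧ (Des w).card = k})) ⟨?_, ?_⟩).symm
    · obtain ⟨t, ht, hk⟩ := tp
      have hof := hofL t ht
      constructor
      · rw [DyckAux.isDyck_iff, hof]
        exact DyckAux.dyckL_toL t
      · rw [DyckAux.Des_card, hof, DyckAux.dstat_toL, hk]
    · rintro ⟨t1, h1⟩ ⟨t2, h2⟩ h
      apply Subtype.ext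
      have := congrArg (fun v => List.ofFn v.1) h
      simp only at this
      rw [hofL t1 h1.1, hofL t2 h2.1] at this
      exact DyckAux.toL_inj t1 t2 this
    · rintro ⟨w, hdy, hk⟩
      have hdL : DyckAux.dyckL (List.ofFn w) := (DyckAux.isDyck_iff w).mp hdy
      obtain ⟨t, ht⟩ := DyckAux.exists_toL (2*n) (List.ofFn w) (by simp) hdL
      have hsz : t.sz = n := by
        have := DyckAux.DT.length_toL t
        rw [ht] at this
        simp at this
        omega
      have hvl : t.vl = k := by
        rw [← DyckAux.dstat_toL, ht, ← DyckAux.Des_card, hk]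
      refine ⟨⟨t, hsz, hvl⟩, ?_⟩
      apply Subtype.ext
      funext i
      show t.toL.getD i false = w i
      rw [ht, List.getD_eq_getElem _ _ (by simpa using i.isLt), List.getElem_ofFn]
  rw [hHP, hDes]
  apply Nat.card_congr
  exact {
    toFun := fun tp => ⟨tp.1.phi, by
      rw [DyckAux.DT.sz_phi, DyckAux.DT.vl_phi]
      exact tp.2⟩
    invFun := fun tp => ⟨tp.1.psi, by
      constructor
      · rw [← DyckAux.DT.sz_phi, DyckAux.DT.phi_psi]
        exact tp.2.1
      · rw [← DyckAux.DT.vl_phi, DyckAux.DT.phi_psi]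
        exact tp.2.2⟩
    left_inv := fun tp => Subtype.ext (DyckAux.DT.psi_phi tp.1)
    right_inv := fun tp => Subtype.ext (DyckAux.DT.phi_psi tp.1) }
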